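/- Assume F_0 is the trivial σ-algebra {∅, Ω} and let ξ be a square-integrable F_N-measurable random variable. Then there exist: a process Y = (Y_n) adapted to 𝔽 with each Y_n square-integrable; an admissible ℍ-predictable process Z = (Z_k); and an 𝔽-martingale O = (O_n) with O_0 = 0, each O_n square-integrable, and E[O_N · Σ_{k=0}^{N−1} φ_k·ΔM_k] = 0 for every admissible ℍ-predictable φ; such that for every n ≤ N, Y_n = ξ − Σ_{k=n}^{N−1} Z_k·ΔM_k − (O_N − O_n) P-almost surely. Moreover the solution is unique: for any two such triples (Y, Z, O) and (Y', Z', O') one has Y_n = Y'_n P-a.s. and O_n = O'_n P-a.s. for every n ≤ N, and Z_k·ΔM_k = Z'_k·ΔM_k P-a.s. for every k < N. -/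

import Mathlib

open MeasureTheory

section BSDEauxiliary

open Filter

namespace BSDEaux

set_option linter.unusedSectionVars false
set_option linter.unusedVariables false

variable {Ω : Type*} {mΩ : MeasurableSpace Ω} {P : Measure Ω} [IsProbabilityMeasure P]

lemma integrable_mul_L2 {f g : Ω → ℝ} (hf : MemLp f 2 P) (hg : MemLp g 2 P) :
    Integrable (fun ω => f ω * g ω) P := by
  refine (hf.integrable_sq.add hg.integrable_sq).mono' (hf.1.mul hg.1) ?_
  filter_upwards with ω
  simp only [Real.norm_eq_abs, Pi.add_apply]
  rw [abs_mul]
  nlinarith [abs_nonneg (f ω), abs_nonneg (g ω), sq_abs (f ω), sq_abs (g ω),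
    sq_nonneg (|f ω| - |g ω|)]


lemma condexp_CS {m : MeasurableSpace Ω} (hm : m ≤ mΩ) {f g : Ω → ℝ}
    (hf : MemLp f 2 P) (hg : MemLp g 2 P) :
    ∀ᵐ ω ∂P, (P[fun ω => f ω * g ω|m]) ω ^ 2 ≤
      (P[fun ω => f ω ^ 2|m]) ω * (P[fun ω => g ω ^ 2|m]) ω := by
  have hfg : Integrable (fun ω => f ω * g ω) P := integrable_mul_L2 hf hg
  have hf2 : Integrable (fun ω => f ω ^ 2) P := hf.integrable_sq
  have hg2 : Integrable (fun ω => g ω ^ 2) P := hg.integrable_sq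
  have key : ∀ q : ℚ, ∀ᵐ ω ∂P,
      0 ≤ (P[fun ω => f ω ^ 2|m]) ω + (2 * (q : ℝ)) * (P[fun ω => f ω * g ω|m]) ω
        + (q : ℝ) ^ 2 * (P[fun ω => g ω ^ 2|m]) ω := by
    intro q
    have e : (fun ω => (f ω + (q : ℝ) * g ω) ^ 2)
        = (fun ω => f ω ^ 2) + ((2 * (q : ℝ)) • fun ω => f ω * g ω)
          + ((q : ℝ) ^ 2 • fun ω => g ω ^ 2) := by
      funext ω
      simp only [Pi.add_apply, Pi.smul_apply, smul_eq_mul]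
      ring
    have h1 : P[(fun ω => (f ω + (q : ℝ) * g ω) ^ 2)|m]
        =ᵐ[P] P[(fun ω => f ω ^ 2) + ((2 * (q : ℝ)) • fun ω => f ω * g ω)|m]
          + P[((q : ℝ) ^ 2 • fun ω => g ω ^ 2)|m] := by
      rw [e]
      exact condExp_add (hf2.add (hfg.smul (2 * (q : ℝ)))) (hg2.smul ((q : ℝ) ^ 2)) m
    have h2 : P[(fun ω => f ω ^ 2) + ((2 * (q : ℝ)) • fun ω => f ω * g ω)|m]
        =ᵐ[P] P[(fun ω => f ω ^ 2)|m] + P[((2 * (q : ℝ)) • fun ω => f ω * g ω)|m] :=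
      condExp_add hf2 (hfg.smul (2 * (q : ℝ))) m
    have h3 := condExp_smul (μ := P) (m := m) (2 * (q : ℝ)) (fun ω => f ω * g ω)
    have h4 := condExp_smul (μ := P) (m := m) ((q : ℝ) ^ 2) (fun ω => g ω ^ 2)
    have h0 : (0 : Ω → ℝ) ≤ᵐ[P] P[(fun ω => (f ω + (q : ℝ) * g ω) ^ 2)|m] :=
      condExp_nonneg (Eventually.of_forall fun ω => sq_nonneg _)
    filter_upwards [h0, h1, h2, h3, h4] with ω w0 w1 w2 w3 w4
    simp only [Pi.add_apply, Pi.smul_apply, Pi.zero_apply, smul_eq_mul] at w0 w1 w2 w3 w4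
    rw [w1, w2, w3, w4] at w0
    linarith
  have hcpos : (0 : Ω → ℝ) ≤ᵐ[P] P[(fun ω => g ω ^ 2)|m] :=
    condExp_nonneg (Eventually.of_forall fun ω => sq_nonneg _)
  filter_upwards [ae_all_iff.2 key, hcpos] with ω hω hc
  set a := (P[fun ω => f ω * g ω|m]) ω
  set b := (P[fun ω => f ω ^ 2|m]) ω
  set c := (P[fun ω => g ω ^ 2|m]) ω
  have hall : ∀ x : ℝ, 0 ≤ c * (x * x) + (2 * a) * x + b := by
    have hq : ∀ q : ℚ, 0 ≤ c * ((q : ℝ) * (q : ℝ)) + (2 * a) * (q : ℝ) + b := by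
      intro q
      have h := hω q
      nlinarith [h]
    intro x
    have hcl : IsClosed {x : ℝ | 0 ≤ c * (x * x) + (2 * a) * x + b} :=
      isClosed_le continuous_const (by continuity)
    have hsub : Set.range ((↑) : ℚ → ℝ) ⊆ {x : ℝ | 0 ≤ c * (x * x) + (2 * a) * x + b} := by
      rintro _ ⟨q, rfl⟩; exact hq q
    have h2 : closure (Set.range ((↑) : ℚ → ℝ)) = Set.univ := Rat.denseRange_cast.closure_eq
    have h3 : (Set.univ : Set ℝ) ⊆ {x : ℝ | 0 ≤ c * (x * x) + (2 * a) * x + b} :=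
      h2 ▸ hcl.closure_subset_iff.2 hsub
    exact h3 (Set.mem_univ x)
  have hd := discrim_le_zero hall
  rw [discrim] at hd
  nlinarith [hd]


lemma memℒp_two_condexp {m : MeasurableSpace Ω} (hm : m ≤ mΩ) {f : Ω → ℝ} (hf : MemLp f 2 P) :
    MemLp (P[f|m]) 2 P := by
  have h1 : MemLp (fun _ : Ω => (1 : ℝ)) 2 P := memLp_const 1
  have hCS := condexp_CS hm hf h1
  have e1 : (fun ω => f ω * (1 : ℝ)) = f := by funext ω; ring
  have e2 : P[fun _ : Ω => (1 : ℝ) ^ 2|m] = fun _ => (1 : ℝ) := by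
    rw [show (fun _ : Ω => (1 : ℝ) ^ 2) = (fun _ : Ω => (1 : ℝ)) from by funext; ring]
    exact condExp_const hm 1
  rw [e1, e2] at hCS
  have hsm : AEStronglyMeasurable[mΩ] (P[f|m]) P :=
    ((stronglyMeasurable_condExp (m := m) (μ := P) (f := f)).mono hm).aestronglyMeasurable
  refine (memLp_two_iff_integrable_sq hsm).2 ?_
  refine (integrable_condExp (μ := P) (m := m) (f := fun ω => f ω ^ 2)).mono'
    (hsm.mul hsm |>.congr ?_) ?_
  · filter_upwards with ω; rw [Pi.mul_apply]; ring
  · filter_upwards [hCS] with ω hω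
    have h2 : (0:ℝ) ≤ (P[fun ω => f ω ^ 2|m]) ω := le_trans (sq_nonneg _) (by simpa using hω)
    rw [Real.norm_eq_abs, abs_le]
    constructor
    · nlinarith [sq_nonneg ((P[f|m]) ω)]
    · simpa using hω


variable {𝔽 ℍ : Filtration ℕ mΩ} {M : ℕ → Ω → ℝ}

lemma integral_mul_increment_zero (hM : Martingale M 𝔽 P) (hM2 : ∀ k, MemLp (M k) 2 P)
    (k : ℕ) {h : Ω → ℝ} (hmeas : StronglyMeasurable[𝔽 k] h)
    (hint : Integrable (fun ω => h ω * (M (k + 1) ω - M k ω)) P) :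
    ∫ ω, h ω * (M (k + 1) ω - M k ω) ∂P = 0 := by
  have hΔint : Integrable (fun ω => M (k + 1) ω - M k ω) P :=
    ((hM2 (k + 1)).sub (hM2 k)).integrable one_le_two
  have hcond : P[fun ω => M (k + 1) ω - M k ω|𝔽 k] =ᵐ[P] 0 := by
    have h1 : P[fun ω => M (k + 1) ω - M k ω|𝔽 k]
        =ᵐ[P] P[M (k + 1)|𝔽 k] - P[M k|𝔽 k] :=
      condExp_sub ((hM2 (k + 1)).integrable one_le_two) ((hM2 k).integrable one_le_two) (𝔽 k)
    have h2 := hM.condExp_ae_eq (Nat.le_succ k)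
    have h3 : P[M k|𝔽 k] = M k :=
      condExp_of_stronglyMeasurable (𝔽.le k) (hM.stronglyAdapted k) ((hM2 k).integrable one_le_two)
    filter_upwards [h1, h2] with ω w1 w2
    simp only [Pi.sub_apply, Pi.zero_apply] at *
    rw [w1, w2, h3]
    ring
  have hpull := condExp_mul_of_stronglyMeasurable_left (μ := P) (m := 𝔽 k) (f := h)
    (g := fun ω => M (k + 1) ω - M k ω) hmeas hint hΔint
  calc ∫ ω, h ω * (M (k + 1) ω - M k ω) ∂P
      = ∫ ω, (P[h * fun ω => M (k + 1) ω - M k ω|𝔽 k]) ω ∂P :=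
        (integral_condExp (𝔽.le k)).symm
    _ = ∫ ω, (h * P[fun ω => M (k + 1) ω - M k ω|𝔽 k]) ω ∂P := integral_congr_ae hpull
    _ = 0 := by
        have hz : (h * P[fun ω => M (k + 1) ω - M k ω|𝔽 k]) =ᵐ[P] 0 := by
          filter_upwards [hcond] with ω w
          simp only [Pi.mul_apply, Pi.zero_apply] at *
          rw [w, mul_zero]
        rw [integral_congr_ae hz]; simp


lemma integral_cross_zero (hle : ∀ k, ℍ k ≤ 𝔽 k) (hM : Martingale M 𝔽 P)
    (hM2 : ∀ k, MemLp (M k) 2 P) {j k : ℕ} (hjk : j < k) {φ ψ : Ω → ℝ}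
    (hφ : StronglyMeasurable[ℍ j] φ) (hψ : StronglyMeasurable[ℍ k] ψ)
    (hφ2 : MemLp (fun ω => φ ω * (M (j + 1) ω - M j ω)) 2 P)
    (hψ2 : MemLp (fun ω => ψ ω * (M (k + 1) ω - M k ω)) 2 P) :
    ∫ ω, (φ ω * (M (j + 1) ω - M j ω)) * (ψ ω * (M (k + 1) ω - M k ω)) ∂P = 0 := by
  have e : (fun ω => (φ ω * (M (j + 1) ω - M j ω)) * (ψ ω * (M (k + 1) ω - M k ω)))
      = fun ω => ((φ ω * (M (j + 1) ω - M j ω)) * ψ ω) * (M (k + 1) ω - M k ω) := by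
    funext ω; ring
  rw [show (∫ ω, (φ ω * (M (j + 1) ω - M j ω)) * (ψ ω * (M (k + 1) ω - M k ω)) ∂P)
      = ∫ ω, ((φ ω * (M (j + 1) ω - M j ω)) * ψ ω) * (M (k + 1) ω - M k ω) ∂P from by rw [e]]
  refine integral_mul_increment_zero hM hM2 k ?_ ?_
  · refine (((hφ.mono ((hle j).trans (𝔽.mono hjk.le))).mul ?_).mul (hψ.mono (hle k)))
    exact ((hM.stronglyAdapted (j + 1)).mono (𝔽.mono hjk)).sub ((hM.stronglyAdapted j).mono (𝔽.mono hjk.le))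
  · exact (integrable_mul_L2 hφ2 hψ2).congr (Eventually.of_forall fun ω => by ring)


lemma exists_Z (hle : ∀ k, ℍ k ≤ 𝔽 k) (hM : Martingale M 𝔽 P)
    (hM2 : ∀ k, MemLp (M k) 2 P) {ξ : Ω → ℝ} (hξ2 : MemLp ξ 2 P) (k : ℕ) :
    ∃ Z : Ω → ℝ, StronglyMeasurable[ℍ k] Z ∧
      MemLp (fun ω => Z ω * (M (k + 1) ω - M k ω)) 2 P ∧
      ∀ φ : Ω → ℝ, StronglyMeasurable[ℍ k] φ →
        MemLp (fun ω => φ ω * (M (k + 1) ω - M k ω)) 2 P →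
        ∫ ω, (Z ω * (M (k + 1) ω - M k ω)) * (φ ω * (M (k + 1) ω - M k ω)) ∂P
          = ∫ ω, ξ ω * (φ ω * (M (k + 1) ω - M k ω)) ∂P := by
  have hmH : ℍ k ≤ mΩ := (hle k).trans (𝔽.le k)
  set Δ : Ω → ℝ := fun ω => M (k + 1) ω - M k ω with hΔdef
  have hΔ2 : MemLp Δ 2 P := (hM2 (k + 1)).sub (hM2 k)
  have hΔmeas : StronglyMeasurable Δ :=
    ((hM.stronglyAdapted (k + 1)).mono (𝔽.le _)).sub ((hM.stronglyAdapted k).mono (𝔽.le _))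
  set a : Ω → ℝ := P[fun ω => ξ ω * Δ ω|ℍ k] with hadef
  set b : Ω → ℝ := P[fun ω => ξ ω ^ 2|ℍ k] with hbdef
  set c : Ω → ℝ := P[fun ω => Δ ω ^ 2|ℍ k] with hcdef
  set Z : Ω → ℝ := fun ω => a ω / c ω with hZdef
  have hCS : ∀ᵐ ω ∂P, a ω ^ 2 ≤ b ω * c ω := condexp_CS hmH hξ2 hΔ2
  have hb0 : (0 : Ω → ℝ) ≤ᵐ[P] b := condExp_nonneg (Eventually.of_forall fun ω => sq_nonneg _)
  have hc0 : (0 : Ω → ℝ) ≤ᵐ[P] c := condExp_nonneg (Eventually.of_forall fun ω => sq_nonneg _)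
  have hZsm : StronglyMeasurable[ℍ k] Z := by
    have : Measurable[ℍ k] Z :=
      stronglyMeasurable_condExp.measurable.div stronglyMeasurable_condExp.measurable
    exact this.stronglyMeasurable
  have hZmeas : StronglyMeasurable Z := hZsm.mono hmH
  -- key pointwise identities
  have hZc : ∀ᵐ ω ∂P, Z ω * c ω = a ω := by
    filter_upwards [hCS, hc0, hb0] with ω h1 h2 h3
    simp only [Pi.zero_apply] at h2 h3
    by_cases hc : c ω = 0
    · have ha : a ω = 0 := by
        have h4 : a ω ^ 2 ≤ 0 := by simpa [hc] using h1
        have h5 : a ω ^ 2 = 0 := le_antisymm h4 (sq_nonneg _)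
        exact sq_eq_zero_iff.mp h5
      simp [hZdef, hc, ha]
    · rw [hZdef]; field_simp
  have hZbound : ∀ᵐ ω ∂P, Z ω ^ 2 * c ω ≤ b ω := by
    filter_upwards [hCS, hc0, hb0] with ω h1 h2 h3
    simp only [Pi.zero_apply] at h2 h3
    by_cases hc : c ω = 0
    · simpa [hZdef, hc] using h3
    · have hcpos : 0 < c ω := lt_of_le_of_ne h2 (Ne.symm hc)
      have he : Z ω ^ 2 * c ω = a ω ^ 2 / c ω := by rw [hZdef]; field_simp
      rw [he, div_le_iff₀ hcpos]
      linarith [h1]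
  -- truncations
  set T : ℕ → Ω → ℝ := fun n ω => min |Z ω| (n : ℝ) with hTdef
  have hT_sm : ∀ n, StronglyMeasurable[ℍ k] (T n) := by
    intro n
    have hcont : Continuous fun x : ℝ => min |x| (n : ℝ) := by continuity
    exact hcont.comp_stronglyMeasurable hZsm
  have hT_nonneg : ∀ n ω, 0 ≤ T n ω := fun n ω => le_min (abs_nonneg _) (Nat.cast_nonneg n)
  have hT_le : ∀ n ω, T n ω ≤ |Z ω| := fun n ω => min_le_left _ _
  set g : ℕ → Ω → ℝ := fun n ω => T n ω ^ 2 * Δ ω ^ 2 with hgdef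
  have hg_meas : ∀ n, Measurable (g n) := fun n =>
    ((((hT_sm n).mono hmH).measurable.pow_const 2).mul (hΔmeas.measurable.pow_const 2))
  have hg_int : ∀ n, Integrable (g n) P := by
    intro n
    refine ((hΔ2.integrable_sq).const_mul ((n : ℝ) ^ 2)).mono'
      (hg_meas n).aestronglyMeasurable ?_
    filter_upwards with ω
    have h1 : T n ω ≤ (n : ℝ) := min_le_right _ _
    have h2 : (0:ℝ) ≤ T n ω := hT_nonneg n ω
    rw [Real.norm_eq_abs, abs_of_nonneg (by positivity : (0:ℝ) ≤ g n ω)]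
    have h3 : T n ω ^ 2 ≤ (n : ℝ) ^ 2 := by nlinarith
    simp only [hgdef]
    nlinarith [sq_nonneg (Δ ω)]
  have hg_bound : ∀ n, ∫ ω, g n ω ∂P ≤ ∫ ω, ξ ω ^ 2 ∂P := by
    intro n
    have hTsq_sm : StronglyMeasurable[ℍ k] (fun ω => T n ω ^ 2) := by
      have e : (fun ω => T n ω ^ 2) = fun ω => T n ω * T n ω := by funext ω; ring
      rw [e]; exact (hT_sm n).mul (hT_sm n)
    have hpull := condExp_mul_of_stronglyMeasurable_left (μ := P) (m := ℍ k)
      (f := fun ω => T n ω ^ 2) (g := fun ω => Δ ω ^ 2) hTsq_sm (hg_int n) hΔ2.integrable_sq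
    have hint2 : Integrable ((fun ω => T n ω ^ 2) * c) P := integrable_condExp.congr hpull
    calc ∫ ω, g n ω ∂P
        = ∫ ω, (P[(fun ω => T n ω ^ 2) * (fun ω => Δ ω ^ 2)|ℍ k]) ω ∂P :=
          (integral_condExp hmH).symm
      _ = ∫ ω, ((fun ω => T n ω ^ 2) * c) ω ∂P := integral_congr_ae hpull
      _ ≤ ∫ ω, b ω ∂P := by
          refine integral_mono_ae hint2 integrable_condExp ?_
          filter_upwards [hc0, hZbound] with ω h2 h3
          simp only [Pi.mul_apply, Pi.zero_apply] at *
          have h4 : T n ω ^ 2 ≤ Z ω ^ 2 := by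
            have := hT_le n ω
            have := hT_nonneg n ω
            nlinarith [sq_abs (Z ω)]
          nlinarith
      _ = ∫ ω, ξ ω ^ 2 ∂P := integral_condExp hmH
  -- monotone convergence
  have hg_nonneg : ∀ n ω, 0 ≤ g n ω := fun n ω => by positivity
  have hsup : ∀ ω, (⨆ n : ℕ, ENNReal.ofReal (g n ω)) = ENNReal.ofReal (Z ω ^ 2 * Δ ω ^ 2) := by
    intro ω
    refine le_antisymm (iSup_le fun n => ENNReal.ofReal_le_ofReal ?_)
      (le_iSup_of_le ⌈|Z ω|⌉₊ (le_of_eq ?_))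
    · have h1 := hT_le n ω
      have h2 := hT_nonneg n ω
      have h3 : T n ω ^ 2 ≤ Z ω ^ 2 := by nlinarith [sq_abs (Z ω)]
      simp only [hgdef]
      nlinarith [sq_nonneg (Δ ω)]
    · congr 1
      have h1 : T ⌈|Z ω|⌉₊ ω = |Z ω| := min_eq_left (Nat.le_ceil _)
      simp only [hgdef, h1, sq_abs]
  have hmono : ∀ ω, Monotone fun n : ℕ => ENNReal.ofReal (g n ω) := by
    intro ω i j hij
    refine ENNReal.ofReal_le_ofReal ?_
    have h1 : T i ω ≤ T j ω := min_le_min le_rfl (Nat.cast_le.2 hij)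
    have h2 := hT_nonneg i ω
    have h3 : T i ω ^ 2 ≤ T j ω ^ 2 := by nlinarith
    simp only [hgdef]
    nlinarith [sq_nonneg (Δ ω)]
  have hMCT := lintegral_iSup' (μ := P)
    (f := fun n ω => ENNReal.ofReal (g n ω))
    (fun n => ((hg_meas n).ennreal_ofReal).aemeasurable)
    (ae_of_all _ hmono)
  have hlint : ∫⁻ ω, ENNReal.ofReal (Z ω ^ 2 * Δ ω ^ 2) ∂P ≤ ENNReal.ofReal (∫ ω, ξ ω ^ 2 ∂P) := by
    have e1 : ∫⁻ ω, ENNReal.ofReal (Z ω ^ 2 * Δ ω ^ 2) ∂P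
        = ⨆ n, ∫⁻ ω, ENNReal.ofReal (g n ω) ∂P := by
      rw [← hMCT]
      refine lintegral_congr fun ω => ?_
      exact (hsup ω).symm
    rw [e1]
    refine iSup_le fun n => ?_
    rw [← ofReal_integral_eq_lintegral_ofReal (hg_int n) (ae_of_all _ fun ω => hg_nonneg n ω)]
    exact ENNReal.ofReal_le_ofReal (hg_bound n)
  -- admissibility
  have hZΔmeas : AEStronglyMeasurable (fun ω => Z ω * Δ ω) P :=
    (hZmeas.mul hΔmeas).aestronglyMeasurable
  have hZΔ2 : MemLp (fun ω => Z ω * Δ ω) 2 P := by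
    refine (memLp_two_iff_integrable_sq hZΔmeas).2 ?_
    refine ⟨(((hZmeas.measurable.mul hΔmeas.measurable).pow_const 2).aestronglyMeasurable), ?_⟩
    rw [hasFiniteIntegral_iff_ofReal (ae_of_all _ fun ω => sq_nonneg _)]
    have e2 : ∫⁻ ω, ENNReal.ofReal ((Z ω * Δ ω) ^ 2) ∂P
        = ∫⁻ ω, ENNReal.ofReal (Z ω ^ 2 * Δ ω ^ 2) ∂P :=
      lintegral_congr fun ω => by rw [mul_pow]
    exact lt_of_le_of_lt (le_of_eq e2 |>.trans hlint) ENNReal.ofReal_lt_top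
  refine ⟨Z, hZsm, hZΔ2, ?_⟩
  -- the key identity
  intro φ hφ hφ2
  have hξΔint : Integrable (fun ω => ξ ω * Δ ω) P := integrable_mul_L2 hξ2 hΔ2
  have hint1 : Integrable ((fun ω => Z ω * φ ω) * fun ω => Δ ω ^ 2) P :=
    (integrable_mul_L2 hZΔ2 hφ2).congr (Eventually.of_forall fun ω => by
      simp only [Pi.mul_apply]; ring)
  have hint2 : Integrable (φ * fun ω => ξ ω * Δ ω) P :=
    (integrable_mul_L2 hξ2 hφ2).congr (Eventually.of_forall fun ω => by
      simp only [Pi.mul_apply]; ring)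
  have hpull1 := condExp_mul_of_stronglyMeasurable_left (μ := P) (m := ℍ k)
    (f := fun ω => Z ω * φ ω) (g := fun ω => Δ ω ^ 2) (hZsm.mul hφ) hint1 hΔ2.integrable_sq
  have hpull2 := condExp_mul_of_stronglyMeasurable_left (μ := P) (m := ℍ k)
    (f := φ) (g := fun ω => ξ ω * Δ ω) hφ hint2 hξΔint
  calc ∫ ω, (Z ω * Δ ω) * (φ ω * Δ ω) ∂P
      = ∫ ω, ((fun ω => Z ω * φ ω) * fun ω => Δ ω ^ 2) ω ∂P :=
        integral_congr_ae (Eventually.of_forall fun ω => by simp only [Pi.mul_apply]; ring)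
    _ = ∫ ω, (P[(fun ω => Z ω * φ ω) * fun ω => Δ ω ^ 2|ℍ k]) ω ∂P :=
        (integral_condExp hmH).symm
    _ = ∫ ω, ((fun ω => Z ω * φ ω) * c) ω ∂P := integral_congr_ae hpull1
    _ = ∫ ω, (φ * a) ω ∂P := by
        refine integral_congr_ae ?_
        filter_upwards [hZc] with ω h1
        simp only [Pi.mul_apply]
        rw [← h1]; ring
    _ = ∫ ω, (P[φ * fun ω => ξ ω * Δ ω|ℍ k]) ω ∂P := (integral_congr_ae hpull2).symm
    _ = ∫ ω, (φ * fun ω => ξ ω * Δ ω) ω ∂P := integral_condExp hmH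
    _ = ∫ ω, ξ ω * (φ ω * Δ ω) ∂P :=
        integral_congr_ae (Eventually.of_forall fun ω => by simp only [Pi.mul_apply]; ring)


/-- cross terms in both orders -/
lemma integral_cross_zero' (hle : ∀ k, ℍ k ≤ 𝔽 k) (hM : Martingale M 𝔽 P)
    (hM2 : ∀ k, MemLp (M k) 2 P) {j k : ℕ} (hjk : j ≠ k) {φ ψ : Ω → ℝ}
    (hφ : StronglyMeasurable[ℍ j] φ) (hψ : StronglyMeasurable[ℍ k] ψ)
    (hφ2 : MemLp (fun ω => φ ω * (M (j + 1) ω - M j ω)) 2 P)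
    (hψ2 : MemLp (fun ω => ψ ω * (M (k + 1) ω - M k ω)) 2 P) :
    ∫ ω, (φ ω * (M (j + 1) ω - M j ω)) * (ψ ω * (M (k + 1) ω - M k ω)) ∂P = 0 := by
  rcases lt_or_gt_of_ne hjk with h | h
  · exact integral_cross_zero hle hM hM2 h hφ hψ hφ2 hψ2
  · rw [show (fun ω => (φ ω * (M (j + 1) ω - M j ω)) * (ψ ω * (M (k + 1) ω - M k ω)))
        = fun ω => (ψ ω * (M (k + 1) ω - M k ω)) * (φ ω * (M (j + 1) ω - M j ω)) from
        funext fun ω => by ring]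
    exact integral_cross_zero hle hM hM2 h hψ hφ hψ2 hφ2


end BSDEaux

end BSDEauxiliary

open BSDEaux Filter


/-- `BSDESol P 𝔽 ℍ M N ξ Y Z O` says that `(Y, Z)` (with orthogonal martingale part `O`)
solves the linear backward stochastic difference equation
`Y_n = ξ − Σ_{k=n}^{N−1} Z_k ΔM_k − (O_N − O_n)` under the partial information `ℍ`:
`Y` is `𝔽`-adapted with each `Y n` square-integrable, `Z` is an admissible `ℍ`-predictable
process, and `O` is a square-integrable `𝔽`-martingale with `O 0 = 0` a.s. satisfying
`E[O_N · Σ_{k<N} φ_k ΔM_k] = 0` for every admissible `ℍ`-predictable `φ`. -/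
def BSDESol {Ω : Type*} {mΩ : MeasurableSpace Ω} (P : Measure Ω)
    (𝔽 ℍ : Filtration ℕ mΩ) (M : ℕ → Ω → ℝ) (N : ℕ)
    (ξ : Ω → ℝ) (Y : ℕ → Ω → ℝ) (Z : ℕ → Ω → ℝ) (O : ℕ → Ω → ℝ) : Prop :=
  StronglyAdapted 𝔽 Y ∧ (∀ n, MemLp (Y n) 2 P) ∧
  (∀ k, StronglyMeasurable[ℍ k] (Z k)) ∧
  (∀ k, MemLp (fun ω => Z k ω * (M (k + 1) ω - M k ω)) 2 P) ∧
  Martingale O 𝔽 P ∧ (O 0 =ᵐ[P] 0) ∧ (∀ n, MemLp (O n) 2 P) ∧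
  (∀ φ : ℕ → Ω → ℝ, (∀ k, StronglyMeasurable[ℍ k] (φ k)) →
    (∀ k, MemLp (fun ω => φ k ω * (M (k + 1) ω - M k ω)) 2 P) →
    ∫ ω, O N ω * ∑ k ∈ Finset.range N, φ k ω * (M (k + 1) ω - M k ω) ∂P = 0) ∧
  (∀ n ≤ N, Y n =ᵐ[P] fun ω =>
    ξ ω - (∑ k ∈ Finset.Ico n N, Z k ω * (M (k + 1) ω - M k ω)) - (O N ω - O n ω))

/-- Discrete-time linear BSDE under partial information: existence and uniqueness of the
solution when `𝔽 0` is the trivial σ-algebra and `ξ` is square-integrable and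
`𝔽 N`-measurable. -/
theorem stmt_10 {Ω : Type*} {mΩ : MeasurableSpace Ω} {P : Measure Ω} [IsProbabilityMeasure P]
    (N : ℕ) (𝔽 ℍ : Filtration ℕ mΩ) (hle : ∀ k, ℍ k ≤ 𝔽 k)
    (h0 : 𝔽 0 = (⊥ : MeasurableSpace Ω))
    (M : ℕ → Ω → ℝ) (hM : Martingale M 𝔽 P) (hM2 : ∀ k, MemLp (M k) 2 P)
    (ξ : Ω → ℝ) (hξmeas : StronglyMeasurable[𝔽 N] ξ) (hξ2 : MemLp ξ 2 P) :
    (∃ (Y Z O : ℕ → Ω → ℝ), BSDESol P 𝔽 ℍ M N ξ Y Z O) ∧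
    (∀ Y Z O Y' Z' O' : ℕ → Ω → ℝ,
      BSDESol P 𝔽 ℍ M N ξ Y Z O → BSDESol P 𝔽 ℍ M N ξ Y' Z' O' →
      (∀ n ≤ N, Y n =ᵐ[P] Y' n) ∧ (∀ n ≤ N, O n =ᵐ[P] O' n) ∧
      (∀ k < N, (fun ω => Z k ω * (M (k + 1) ω - M k ω)) =ᵐ[P]
        (fun ω => Z' k ω * (M (k + 1) ω - M k ω)))) := by
  classical
  constructor
  · -- EXISTENCE
    choose Z hZsm hZ2 hZkey using fun k => exists_Z hle hM hM2 hξ2 k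
    have hS2 : MemLp (fun ω => ∑ k ∈ Finset.range N, Z k ω * (M (k + 1) ω - M k ω)) 2 P :=
      memLp_finsetSum _ fun k _ => hZ2 k
    set G : Ω → ℝ := fun ω => ξ ω - ∑ k ∈ Finset.range N, Z k ω * (M (k + 1) ω - M k ω)
      with hGdef
    have hG2 : MemLp G 2 P := hξ2.sub hS2
    have hGint : Integrable G P := hG2.integrable one_le_two
    have hGsm : StronglyMeasurable[𝔽 N] G := by
      refine hξmeas.sub (Finset.stronglyMeasurable_fun_sum _ fun k hk => ?_)
      rw [Finset.mem_range] at hk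
      exact ((hZsm k).mono ((hle k).trans (𝔽.mono hk.le))).mul
        (((hM.stronglyAdapted (k + 1)).mono (𝔽.mono hk)).sub ((hM.stronglyAdapted k).mono (𝔽.mono hk.le)))
    set c₀ : ℝ := ∫ ω, G ω ∂P with hc₀def
    set O : ℕ → Ω → ℝ := fun n ω => (P[G|𝔽 n]) ω - c₀ with hOdef
    have hOmart : Martingale O 𝔽 P := (martingale_condExp G 𝔽 P).sub (martingale_const 𝔽 P c₀)
    have hcondbot : P[G|𝔽 0] = fun _ => c₀ := by rw [h0]; exact condExp_bot G
    have hO0 : O 0 =ᵐ[P] 0 := Eventually.of_forall fun ω => by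
      simp [hOdef, hcondbot]
    have hO2 : ∀ n, MemLp (O n) 2 P := fun n =>
      (memℒp_two_condexp (𝔽.le n) hG2).sub (memLp_const c₀)
    have hcondN : P[G|𝔽 N] = G := condExp_of_stronglyMeasurable (𝔽.le N) hGsm hGint
    have hON : ∀ ω, O N ω = G ω - c₀ := fun ω => by simp only [hOdef, hcondN]
    set Y : ℕ → Ω → ℝ := fun n ω =>
      c₀ + (∑ k ∈ Finset.range n, Z k ω * (M (k + 1) ω - M k ω)) + O n ω with hYdef
    refine ⟨Y, Z, O, ?_, ?_, hZsm, hZ2, hOmart, hO0, hO2, ?_, ?_⟩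
    · -- adapted
      intro n
      refine (stronglyMeasurable_const.add (Finset.stronglyMeasurable_fun_sum _ fun k hk => ?_)).add
        ((stronglyMeasurable_condExp).sub stronglyMeasurable_const)
      rw [Finset.mem_range] at hk
      exact ((hZsm k).mono ((hle k).trans (𝔽.mono hk.le))).mul
        (((hM.stronglyAdapted (k + 1)).mono (𝔽.mono hk)).sub ((hM.stronglyAdapted k).mono (𝔽.mono hk.le)))
    · -- L2
      intro n
      exact ((memLp_const c₀).add (memLp_finsetSum _ fun k _ => hZ2 k)).add (hO2 n)
    · -- orthogonality
      intro φ hφsm hφ2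
      have hI2 : MemLp (fun ω => ∑ k ∈ Finset.range N, φ k ω * (M (k + 1) ω - M k ω)) 2 P :=
        memLp_finsetSum _ fun k _ => hφ2 k
      have hIint : ∀ k, Integrable (fun ω => φ k ω * (M (k + 1) ω - M k ω)) P := fun k =>
        (hφ2 k).integrable one_le_two
      have hint1 : Integrable (fun ω =>
          ξ ω * ∑ k ∈ Finset.range N, φ k ω * (M (k + 1) ω - M k ω)) P :=
        integrable_mul_L2 hξ2 hI2
      have hint2 : Integrable (fun ω =>
          (∑ k ∈ Finset.range N, Z k ω * (M (k + 1) ω - M k ω)) *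
          ∑ k ∈ Finset.range N, φ k ω * (M (k + 1) ω - M k ω)) P :=
        integrable_mul_L2 hS2 hI2
      have hIzero : ∫ ω, ∑ k ∈ Finset.range N, φ k ω * (M (k + 1) ω - M k ω) ∂P = 0 := by
        rw [integral_finset_sum _ fun k _ => hIint k]
        refine Finset.sum_eq_zero fun k _ => ?_
        exact integral_mul_increment_zero hM hM2 k ((hφsm k).mono (hle k)) (hIint k)
      have hxi : ∫ ω, ξ ω * ∑ k ∈ Finset.range N, φ k ω * (M (k + 1) ω - M k ω) ∂P
          = ∑ k ∈ Finset.range N, ∫ ω, ξ ω * (φ k ω * (M (k + 1) ω - M k ω)) ∂P := by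
        rw [show (fun ω => ξ ω * ∑ k ∈ Finset.range N, φ k ω * (M (k + 1) ω - M k ω))
            = fun ω => ∑ k ∈ Finset.range N, ξ ω * (φ k ω * (M (k + 1) ω - M k ω)) from
            funext fun ω => by rw [Finset.mul_sum]]
        exact integral_finset_sum _ fun k _ => integrable_mul_L2 hξ2 (hφ2 k)
      have hSI : ∫ ω, (∑ k ∈ Finset.range N, Z k ω * (M (k + 1) ω - M k ω)) *
            ∑ k ∈ Finset.range N, φ k ω * (M (k + 1) ω - M k ω) ∂P
          = ∑ j ∈ Finset.range N, ∫ ω, ξ ω * (φ j ω * (M (j + 1) ω - M j ω)) ∂P := by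
        rw [show (fun ω => (∑ k ∈ Finset.range N, Z k ω * (M (k + 1) ω - M k ω)) *
              ∑ k ∈ Finset.range N, φ k ω * (M (k + 1) ω - M k ω))
            = fun ω => ∑ j ∈ Finset.range N, ∑ k ∈ Finset.range N,
              (Z j ω * (M (j + 1) ω - M j ω)) * (φ k ω * (M (k + 1) ω - M k ω)) from
            funext fun ω => by rw [Finset.sum_mul_sum]]
        rw [integral_finset_sum _ fun j _ => integrable_finset_sum _ fun k _ =>
          integrable_mul_L2 (hZ2 j) (hφ2 k)]
        refine Finset.sum_congr rfl fun j hj => ?_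
        rw [integral_finset_sum _ fun k _ => integrable_mul_L2 (hZ2 j) (hφ2 k)]
        rw [Finset.sum_eq_single_of_mem j hj]
        · exact hZkey j (φ j) (hφsm j) (hφ2 j)
        · intro k _ hkj
          exact integral_cross_zero' hle hM hM2 (Ne.symm hkj) (hZsm j) (hφsm k) (hZ2 j) (hφ2 k)
      have hsplit : ∀ ω, O N ω * ∑ k ∈ Finset.range N, φ k ω * (M (k + 1) ω - M k ω)
          = (ξ ω * ∑ k ∈ Finset.range N, φ k ω * (M (k + 1) ω - M k ω)
            - (∑ k ∈ Finset.range N, Z k ω * (M (k + 1) ω - M k ω)) *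
              ∑ k ∈ Finset.range N, φ k ω * (M (k + 1) ω - M k ω))
            - c₀ * ∑ k ∈ Finset.range N, φ k ω * (M (k + 1) ω - M k ω) := by
        intro ω
        rw [hON ω, hGdef]
        ring
      calc ∫ ω, O N ω * ∑ k ∈ Finset.range N, φ k ω * (M (k + 1) ω - M k ω) ∂P
          = ∫ ω, ((ξ ω * ∑ k ∈ Finset.range N, φ k ω * (M (k + 1) ω - M k ω)
              - (∑ k ∈ Finset.range N, Z k ω * (M (k + 1) ω - M k ω)) *
                ∑ k ∈ Finset.range N, φ k ω * (M (k + 1) ω - M k ω))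
              - c₀ * ∑ k ∈ Finset.range N, φ k ω * (M (k + 1) ω - M k ω)) ∂P :=
            integral_congr_ae (Eventually.of_forall hsplit)
        _ = 0 := by
            have hint12 : Integrable (fun ω =>
                ξ ω * ∑ k ∈ Finset.range N, φ k ω * (M (k + 1) ω - M k ω)
                - (∑ k ∈ Finset.range N, Z k ω * (M (k + 1) ω - M k ω)) *
                  ∑ k ∈ Finset.range N, φ k ω * (M (k + 1) ω - M k ω)) P := hint1.sub hint2
            have hintc : Integrable (fun ω =>
                c₀ * ∑ k ∈ Finset.range N, φ k ω * (M (k + 1) ω - M k ω)) P :=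
              (hI2.integrable one_le_two).const_mul c₀
            rw [integral_sub hint12 hintc, integral_sub hint1 hint2, hxi, hSI,
              integral_const_mul, hIzero]
            ring
    · -- the BSDE equation
      intro n hn
      refine Eventually.of_forall fun ω => ?_
      have hsplit : (∑ k ∈ Finset.range n, Z k ω * (M (k + 1) ω - M k ω))
          + ∑ k ∈ Finset.Ico n N, Z k ω * (M (k + 1) ω - M k ω)
          = ∑ k ∈ Finset.range N, Z k ω * (M (k + 1) ω - M k ω) := by
        simp only [Finset.range_eq_Ico]
        exact Finset.sum_Ico_consecutive _ (Nat.zero_le n) hn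
      have h1 := hON ω
      simp only [hGdef] at h1
      simp only [hYdef]
      rw [h1]
      ring_nf
      ring_nf at hsplit
      linarith [hsplit]
  · -- UNIQUENESS
    intro Y Z O Y' Z' O' hsol hsol'
    obtain ⟨hYad, hY2, hZsm, hZ2, hOm, hO0, hO2, horth, heq⟩ := hsol
    obtain ⟨hY'ad, hY'2, hZ'sm, hZ'2, hO'm, hO'0, hO'2, horth', heq'⟩ := hsol'
    -- step 1 : integral of Y 0 equals integral of ξ, and Y 0 is a.e. constant
    have hconst : ∀ (Yc : ℕ → Ω → ℝ) (Oc : ℕ → Ω → ℝ) (Zc : ℕ → Ω → ℝ),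
        StronglyAdapted 𝔽 Yc → Martingale Oc 𝔽 P → (Oc 0 =ᵐ[P] 0) → (∀ n, MemLp (Oc n) 2 P) →
        (∀ k, StronglyMeasurable[ℍ k] (Zc k)) →
        (∀ k, MemLp (fun ω => Zc k ω * (M (k + 1) ω - M k ω)) 2 P) →
        (Yc 0 =ᵐ[P] fun ω =>
          ξ ω - (∑ k ∈ Finset.Ico 0 N, Zc k ω * (M (k + 1) ω - M k ω)) - (Oc N ω - Oc 0 ω)) →
        Yc 0 =ᵐ[P] fun _ => ∫ ω, ξ ω ∂P := by
      intro Yc Oc Zc hYcad hOcm hOc0 hOc2 hZcsm hZc2 heqc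
      obtain ⟨cY, hcY⟩ := stronglyMeasurable_bot_iff.mp (h0 ▸ hYcad 0)
      have hintO : ∫ ω, Oc N ω ∂P = 0 := by
        have h1 : P[Oc N|𝔽 0] =ᵐ[P] Oc 0 := hOcm.condExp_ae_eq (Nat.zero_le N)
        have h2 : ∫ ω, (P[Oc N|𝔽 0]) ω ∂P = ∫ ω, Oc N ω ∂P := integral_condExp (𝔽.le 0)
        rw [← h2, integral_congr_ae h1, integral_congr_ae hOc0]
        simp
      have hintO0 : ∫ ω, Oc 0 ω ∂P = 0 := by
        rw [integral_congr_ae hOc0]; simp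
      have hintZ : ∀ k, ∫ ω, Zc k ω * (M (k + 1) ω - M k ω) ∂P = 0 := fun k =>
        integral_mul_increment_zero hM hM2 k ((hZcsm k).mono (hle k))
          ((hZc2 k).integrable one_le_two)
      have hY0int : ∫ ω, Yc 0 ω ∂P = ∫ ω, ξ ω ∂P := by
        rw [integral_congr_ae heqc]
        have hintS : Integrable (fun ω => ∑ k ∈ Finset.Ico 0 N,
            Zc k ω * (M (k + 1) ω - M k ω)) P :=
          integrable_finset_sum _ fun k _ => (hZc2 k).integrable one_le_two
        have hA : Integrable (fun ω => ξ ω - ∑ k ∈ Finset.Ico 0 N,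
            Zc k ω * (M (k + 1) ω - M k ω)) P := (hξ2.integrable one_le_two).sub hintS
        have hB : Integrable (fun ω => Oc N ω - Oc 0 ω) P :=
          ((hOc2 N).integrable one_le_two).sub ((hOc2 0).integrable one_le_two)
        rw [integral_sub hA hB,
          integral_sub (hξ2.integrable one_le_two) hintS,
          integral_sub ((hOc2 N).integrable one_le_two) ((hOc2 0).integrable one_le_two),
          integral_finset_sum _ fun k _ => (hZc2 k).integrable one_le_two]
        rw [hintO, hintO0]
        rw [Finset.sum_congr rfl fun k _ => hintZ k]
        simp
      have hcY' : cY = ∫ ω, ξ ω ∂P := by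
        rw [← hY0int, hcY]
        simp
      rw [hcY, hcY']
    have hY0 := hconst Y O Z hYad hOm hO0 hO2 hZsm hZ2 (heq 0 (Nat.zero_le N))
    have hY0' := hconst Y' O' Z' hY'ad hO'm hO'0 hO'2 hZ'sm hZ'2 (heq' 0 (Nat.zero_le N))
    -- step 2 : O N - O' N = -(sum of W) a.e.
    have hDN : (fun ω => O N ω - O' N ω) =ᵐ[P]
        fun ω => -(∑ k ∈ Finset.range N, (Z k ω * (M (k + 1) ω - M k ω)
          - Z' k ω * (M (k + 1) ω - M k ω))) := by
      filter_upwards [heq 0 (Nat.zero_le N), heq' 0 (Nat.zero_le N), hY0, hY0', hO0, hO'0]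
        with ω h1 h2 h3 h4 h5 h6
      simp only [Pi.zero_apply] at h5 h6
      rw [h3] at h1
      rw [h4] at h2
      rw [Finset.range_eq_Ico, Finset.sum_sub_distrib]
      rw [h5] at h1
      rw [h6] at h2
      linarith [h1, h2]
    -- step 3 : integral of (sum W)^2 is zero
    have hW2 : ∀ k, MemLp (fun ω => Z k ω * (M (k + 1) ω - M k ω)
        - Z' k ω * (M (k + 1) ω - M k ω)) 2 P := fun k => (hZ2 k).sub (hZ'2 k)
    have hSW2 : MemLp (fun ω => ∑ k ∈ Finset.range N, (Z k ω * (M (k + 1) ω - M k ω)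
        - Z' k ω * (M (k + 1) ω - M k ω))) 2 P := memLp_finsetSum _ fun k _ => hW2 k
    have hIZ2 : MemLp (fun ω => ∑ k ∈ Finset.range N, Z k ω * (M (k + 1) ω - M k ω)) 2 P :=
      memLp_finsetSum _ fun k _ => hZ2 k
    have hIZ'2 : MemLp (fun ω => ∑ k ∈ Finset.range N, Z' k ω * (M (k + 1) ω - M k ω)) 2 P :=
      memLp_finsetSum _ fun k _ => hZ'2 k
    have hDNSW : ∫ ω, (O N ω - O' N ω) * (∑ k ∈ Finset.range N,
        (Z k ω * (M (k + 1) ω - M k ω) - Z' k ω * (M (k + 1) ω - M k ω))) ∂P = 0 := by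
      have e : (fun ω => (O N ω - O' N ω) * (∑ k ∈ Finset.range N,
          (Z k ω * (M (k + 1) ω - M k ω) - Z' k ω * (M (k + 1) ω - M k ω))))
          = fun ω => ((O N ω * ∑ k ∈ Finset.range N, Z k ω * (M (k + 1) ω - M k ω))
            - O N ω * ∑ k ∈ Finset.range N, Z' k ω * (M (k + 1) ω - M k ω))
            - ((O' N ω * ∑ k ∈ Finset.range N, Z k ω * (M (k + 1) ω - M k ω))
            - O' N ω * ∑ k ∈ Finset.range N, Z' k ω * (M (k + 1) ω - M k ω)) := by
        funext ω
        rw [Finset.sum_sub_distrib]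
        ring
      rw [e]
      have hA : Integrable (fun ω =>
          (O N ω * ∑ k ∈ Finset.range N, Z k ω * (M (k + 1) ω - M k ω))
          - O N ω * ∑ k ∈ Finset.range N, Z' k ω * (M (k + 1) ω - M k ω)) P :=
        (integrable_mul_L2 (hO2 N) hIZ2).sub (integrable_mul_L2 (hO2 N) hIZ'2)
      have hB : Integrable (fun ω =>
          (O' N ω * ∑ k ∈ Finset.range N, Z k ω * (M (k + 1) ω - M k ω))
          - O' N ω * ∑ k ∈ Finset.range N, Z' k ω * (M (k + 1) ω - M k ω)) P :=
        (integrable_mul_L2 (hO'2 N) hIZ2).sub (integrable_mul_L2 (hO'2 N) hIZ'2)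
      rw [integral_sub hA hB,
        integral_sub (integrable_mul_L2 (hO2 N) hIZ2) (integrable_mul_L2 (hO2 N) hIZ'2),
        integral_sub (integrable_mul_L2 (hO'2 N) hIZ2) (integrable_mul_L2 (hO'2 N) hIZ'2)]
      rw [horth Z hZsm hZ2, horth Z' hZ'sm hZ'2, horth' Z hZsm hZ2, horth' Z' hZ'sm hZ'2]
      ring
    have hSWsq : ∫ ω, (∑ k ∈ Finset.range N, (Z k ω * (M (k + 1) ω - M k ω)
        - Z' k ω * (M (k + 1) ω - M k ω))) ^ 2 ∂P = 0 := by
      have e2 : (fun ω => (∑ k ∈ Finset.range N, (Z k ω * (M (k + 1) ω - M k ω)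
          - Z' k ω * (M (k + 1) ω - M k ω))) ^ 2) =ᵐ[P]
          fun ω => -((O N ω - O' N ω) * (∑ k ∈ Finset.range N,
            (Z k ω * (M (k + 1) ω - M k ω) - Z' k ω * (M (k + 1) ω - M k ω)))) := by
        filter_upwards [hDN] with ω h
        rw [h]
        ring
      rw [integral_congr_ae e2, integral_neg, hDNSW, neg_zero]
    -- step 4 : each W k vanishes a.e.
    have hsum_sq : ∑ k ∈ Finset.range N, ∫ ω, (Z k ω * (M (k + 1) ω - M k ω)
        - Z' k ω * (M (k + 1) ω - M k ω)) ^ 2 ∂P = 0 := by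
      have e3 : (fun ω => (∑ k ∈ Finset.range N, (Z k ω * (M (k + 1) ω - M k ω)
          - Z' k ω * (M (k + 1) ω - M k ω))) ^ 2)
          = fun ω => ∑ j ∈ Finset.range N, ∑ k ∈ Finset.range N,
            ((Z j ω * (M (j + 1) ω - M j ω) - Z' j ω * (M (j + 1) ω - M j ω))
              * (Z k ω * (M (k + 1) ω - M k ω) - Z' k ω * (M (k + 1) ω - M k ω))) := by
        funext ω
        rw [sq, Finset.sum_mul_sum]
      rw [← hSWsq, e3]
      rw [integral_finset_sum _ fun j _ => integrable_finset_sum _ fun k _ =>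
        integrable_mul_L2 (hW2 j) (hW2 k)]
      refine (Finset.sum_congr rfl fun j hj => ?_).symm
      rw [integral_finset_sum _ fun k _ => integrable_mul_L2 (hW2 j) (hW2 k)]
      rw [Finset.sum_eq_single_of_mem j hj]
      · exact integral_congr_ae (Eventually.of_forall fun ω => by ring)
      · intro k _ hkj
        have e4 : (fun ω => (Z j ω * (M (j + 1) ω - M j ω) - Z' j ω * (M (j + 1) ω - M j ω))
            * (Z k ω * (M (k + 1) ω - M k ω) - Z' k ω * (M (k + 1) ω - M k ω)))
            = fun ω => ((Z j ω - Z' j ω) * (M (j + 1) ω - M j ω))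
              * ((Z k ω - Z' k ω) * (M (k + 1) ω - M k ω)) := by
          funext ω; ring
        rw [show ∫ ω, (Z j ω * (M (j + 1) ω - M j ω) - Z' j ω * (M (j + 1) ω - M j ω))
            * (Z k ω * (M (k + 1) ω - M k ω) - Z' k ω * (M (k + 1) ω - M k ω)) ∂P
            = ∫ ω, ((Z j ω - Z' j ω) * (M (j + 1) ω - M j ω))
              * ((Z k ω - Z' k ω) * (M (k + 1) ω - M k ω)) ∂P from by rw [e4]]
        have hWj2 : MemLp (fun ω => (Z j ω - Z' j ω) * (M (j + 1) ω - M j ω)) 2 P :=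
          (hW2 j).ae_eq (Eventually.of_forall fun ω => by ring)
        have hWk2 : MemLp (fun ω => (Z k ω - Z' k ω) * (M (k + 1) ω - M k ω)) 2 P :=
          (hW2 k).ae_eq (Eventually.of_forall fun ω => by ring)
        exact integral_cross_zero' hle hM hM2 (Ne.symm hkj) ((hZsm j).sub (hZ'sm j))
          ((hZsm k).sub (hZ'sm k)) hWj2 hWk2
    have hWzero : ∀ k < N, (fun ω => Z k ω * (M (k + 1) ω - M k ω)) =ᵐ[P]
        (fun ω => Z' k ω * (M (k + 1) ω - M k ω)) := by
      intro k hk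
      have hnn : ∀ j ∈ Finset.range N, 0 ≤ ∫ ω, (Z j ω * (M (j + 1) ω - M j ω)
          - Z' j ω * (M (j + 1) ω - M j ω)) ^ 2 ∂P := fun j _ =>
        integral_nonneg fun ω => sq_nonneg _
      have hk0 : ∫ ω, (Z k ω * (M (k + 1) ω - M k ω)
          - Z' k ω * (M (k + 1) ω - M k ω)) ^ 2 ∂P = 0 :=
        (Finset.sum_eq_zero_iff_of_nonneg hnn).mp hsum_sq k (Finset.mem_range.mpr hk)
      have hae : (fun ω => (Z k ω * (M (k + 1) ω - M k ω)
          - Z' k ω * (M (k + 1) ω - M k ω)) ^ 2) =ᵐ[P] 0 := by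
        rw [← integral_eq_zero_iff_of_nonneg_ae (Eventually.of_forall fun ω => sq_nonneg _)
          ((hW2 k).integrable_sq)]
        exact hk0
      filter_upwards [hae] with ω h
      simp only [Pi.zero_apply] at h
      have := sq_eq_zero_iff.mp h
      linarith
    -- step 5 : sum of W vanishes a.e., hence O n = O' n for n ≤ N
    have hSWzero : (fun ω => ∑ k ∈ Finset.range N, (Z k ω * (M (k + 1) ω - M k ω)
        - Z' k ω * (M (k + 1) ω - M k ω))) =ᵐ[P] 0 := by
      have hall : ∀ᵐ ω ∂P, ∀ k, k < N → Z k ω * (M (k + 1) ω - M k ω)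
          = Z' k ω * (M (k + 1) ω - M k ω) := by
        rw [ae_all_iff]
        intro k
        by_cases hk : k < N
        · filter_upwards [hWzero k hk] with ω h _
          exact h
        · exact Eventually.of_forall fun ω h => absurd h hk
      filter_upwards [hall] with ω h
      simp only [Pi.zero_apply]
      refine Finset.sum_eq_zero fun k hk => ?_
      rw [h k (Finset.mem_range.mp hk), sub_self]
    have hDNzero : (fun ω => O N ω - O' N ω) =ᵐ[P] 0 := by
      filter_upwards [hDN, hSWzero] with ω h1 h2
      simp only [Pi.zero_apply] at *
      rw [h1, h2, neg_zero]
    have hDmart : Martingale (O - O') 𝔽 P := hOm.sub hO'm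
    have hDn : ∀ n ≤ N, O n =ᵐ[P] O' n := by
      intro n hn
      have h1 : P[(O - O') N|𝔽 n] =ᵐ[P] (O - O') n := hDmart.condExp_ae_eq hn
      have h2 : (O - O') N =ᵐ[P] (0 : Ω → ℝ) := by
        filter_upwards [hDNzero] with ω h
        simpa using h
      have h3 : P[(O - O') N|𝔽 n] =ᵐ[P] P[(0 : Ω → ℝ)|𝔽 n] := condExp_congr_ae h2
      have h4 : P[(0 : Ω → ℝ)|𝔽 n] = 0 := condExp_zero
      have h5 : (O - O') n =ᵐ[P] 0 := (h1.symm.trans h3).trans (by rw [h4])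
      filter_upwards [h5] with ω h
      simp only [Pi.sub_apply, Pi.zero_apply] at h
      linarith
    refine ⟨?_, hDn, hWzero⟩
    -- step 6 : Y n = Y' n for n ≤ N
    intro n hn
    have hall : ∀ᵐ ω ∂P, ∀ k, k < N → Z k ω * (M (k + 1) ω - M k ω)
        = Z' k ω * (M (k + 1) ω - M k ω) := by
      rw [ae_all_iff]
      intro k
      by_cases hk : k < N
      · filter_upwards [hWzero k hk] with ω h _
        exact h
      · exact Eventually.of_forall fun ω h => absurd h hk
    filter_upwards [heq n hn, heq' n hn, hall, hDNzero, hDn n hn] with ω h1 h2 h3 h4 h5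
    rw [h1, h2]
    have hsum : ∑ k ∈ Finset.Ico n N, Z k ω * (M (k + 1) ω - M k ω)
        = ∑ k ∈ Finset.Ico n N, Z' k ω * (M (k + 1) ω - M k ω) := by
      refine Finset.sum_congr rfl fun k hk => ?_
      exact h3 k (Finset.mem_Ico.mp hk).2
    rw [hsum]
    simp only [Pi.zero_apply] at h4
    linarith
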